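/- Let q be a prime power and let A(X) ∈ 𝔽_q[X] be a nonzero polynomial of pseudodegree at most k. Then the residue of deg(A) modulo q lies in the interval [0, k]. -/

import Mathlib

open Polynomial
theorem lucas_aux (p s m r : ℕ) [Fact p.Prime] (hr : r < p ^ s) :
    ((p ^ s * m + r).choose (p ^ s * m) : ℤ) ≡ 1 [ZMOD p] := by
  have hp : 0 < p := (Fact.out (p := p.Prime)).pos
  have hps : 0 < p ^ s := Nat.pow_pos hp
  have h := Choose.choose_modEq_choose_mul_prod_range_choose
    (p := p) (n := p ^ s * m + r) (k := p ^ s * m) s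
  have h1 : (p ^ s * m + r) / p ^ s = m := by
    rw [Nat.mul_add_div hps, Nat.div_eq_of_lt hr, add_zero]
  have h2 : (p ^ s * m) / p ^ s = m := Nat.mul_div_cancel_left m hps
  have h3 : ∏ i ∈ Finset.range s,
      (((p ^ s * m + r) / p ^ i % p).choose ((p ^ s * m) / p ^ i % p)) = 1 := by
    apply Finset.prod_eq_one
    intro i hi
    rw [Finset.mem_range] at hi
    have hz : (p ^ s * m) / p ^ i % p = 0 := by
      have he : p ^ s * m = p ^ i * (p ^ (s - i) * m) := by
        rw [← mul_assoc, ← pow_add, Nat.add_sub_cancel' hi.le]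
      rw [he, Nat.mul_div_cancel_left _ (Nat.pow_pos hp)]
      have : p ∣ p ^ (s - i) * m :=
        dvd_mul_of_dvd_left (dvd_pow_self p (Nat.sub_ne_zero_of_lt hi)) m
      omega
    rw [hz, Nat.choose_zero_right]
  rw [h1, h2, Nat.choose_self, h3] at h
  simpa using h

/-- `A ∈ 𝔽_q[X]` has pseudodegree at most `k`: for every `ℓ ≥ 0`, the remainder of the
`ℓ`-th Hasse derivative of `A` upon division by `Λ(X) = X^q - X` has degree at most `k`. -/
def PdegLE {F : Type*} [Field F] (q : ℕ) (A : F[X]) (k : ℕ) : Prop :=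
  ∀ ℓ : ℕ, ((hasseDeriv ℓ A) %ₘ (X ^ q - X)).degree ≤ (k : WithBot ℕ)

/-- If `A ∈ 𝔽_q[X]` is nonzero of pseudodegree at most `k`, then
`deg(A) mod q ∈ [0, k]`. -/
theorem stmt10 {F : Type*} [Field F] [Fintype F] (q : ℕ) (hq : Fintype.card F = q)
    (A : F[X]) (hA : A ≠ 0) (k : ℕ) (hpdeg : PdegLE q A k) :
    A.natDegree % q ≤ k := by
  -- q is a prime power
  obtain ⟨p, hc⟩ := CharP.exists F
  haveI : CharP F p := hc
  obtain ⟨s, hp, hcard⟩ := FiniteField.card F p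
  haveI : Fact p.Prime := ⟨hp⟩
  have hqps : q = p ^ (s : ℕ) := by rw [← hq, hcard]
  have hq2 : 2 ≤ q := by rw [← hq]; exact Fintype.one_lt_card
  set d := A.natDegree with hd
  set m := d / q
  set r := d % q
  have hrq : r < q := Nat.mod_lt _ (by omega)
  have hdecomp : q * m + r = d := Nat.div_add_mod d q
  set B := hasseDeriv (q * m) A with hB
  -- leading coefficient of B at r is nonzero
  have hchoose : ((d.choose (q * m) : F)) = 1 := by
    have hmq := lucas_aux p s m r (hqps ▸ hrq)
    have hdvd : (p : ℤ) ∣ ((d.choose (q * m) : ℤ) - 1) := by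
      rw [← hdecomp, hqps]
      exact hmq.symm.dvd
    have h0 : (((d.choose (q * m) : ℤ) - 1 : ℤ) : F) = 0 :=
      (CharP.intCast_eq_zero_iff F p _).mpr hdvd
    push_cast at h0
    rwa [sub_eq_zero] at h0
  have hcoeffr : B.coeff r ≠ 0 := by
    rw [hB, hasseDeriv_coeff]
    have : r + q * m = d := by omega
    rw [this, hchoose, one_mul]
    exact mt leadingCoeff_eq_zero.mp hA ∘ id
  have hdegB : B.degree ≤ (r : WithBot ℕ) := by
    rw [degree_le_iff_coeff_zero]
    intro n hn
    rw [hB, hasseDeriv_coeff]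
    have hn' : (r : WithBot ℕ) < n := hn
    have : d < n + q * m := by
      have : r < n := by exact_mod_cast hn'
      omega
    rw [coeff_eq_zero_of_natDegree_lt this, mul_zero]
  -- X^q - X is monic of degree q
  have hmonic : (X ^ q - X : F[X]).Monic := by
    apply monic_X_pow_sub
    calc (X : F[X]).degree ≤ 1 := degree_X_le
    _ < q := by exact_mod_cast Nat.lt_of_lt_of_le one_lt_two hq2
  have hdegXq : (X ^ q - X : F[X]).degree = q := by
    rw [degree_sub_eq_left_of_degree_lt, degree_X_pow]
    rw [degree_X_pow]
    calc (X : F[X]).degree ≤ 1 := degree_X_le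
    _ < q := by exact_mod_cast Nat.lt_of_lt_of_le one_lt_two hq2
  have hmod : B %ₘ (X ^ q - X) = B := by
    rw [modByMonic_eq_self_iff hmonic, hdegXq]
    exact lt_of_le_of_lt hdegB (by exact_mod_cast hrq)
  have := hpdeg (q * m)
  rw [← hB, hmod] at this
  have hrB : (r : WithBot ℕ) ≤ B.degree := le_degree_of_ne_zero hcoeffr
  have : (r : WithBot ℕ) ≤ (k : WithBot ℕ) := le_trans hrB this
  exact_mod_cast this
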